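/- For the Korányi distance d(x,x₀) = ‖x₀⁻¹·x‖_K on the Heisenberg group, the horizontal gradient has norm ‖∇₀ d(·,x₀)‖(x) = P^{1/2}/(P² + 16Q²)^{1/4} ≤ 1, where P = (x₁-a₁)² + (x₂-a₂)² and Q = x₃ - a₃ - (a₁x₂)/2 + (a₂x₁)/2, for x₀ = (a₁,a₂,a₃) and all x with d(x,x₀) > 0. -/

import Mathlib

/-- The Heisenberg horizontal vector field `X₁ = ∂_{x₁} - (x₂/2)∂_{x₃}`. -/
noncomputable def X1 (f : ℝ × ℝ × ℝ → ℝ) (x : ℝ × ℝ × ℝ) : ℝ :=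
  deriv (fun t => f (t, x.2.1, x.2.2)) x.1
    - x.2.1 / 2 * deriv (fun t => f (x.1, x.2.1, t)) x.2.2

/-- The Heisenberg horizontal vector field `X₂ = ∂_{x₂} + (x₁/2)∂_{x₃}`. -/
noncomputable def X2 (f : ℝ × ℝ × ℝ → ℝ) (x : ℝ × ℝ × ℝ) : ℝ :=
  deriv (fun t => f (x.1, t, x.2.2)) x.2.1
    + x.1 / 2 * deriv (fun t => f (x.1, x.2.1, t)) x.2.2

/-- The Heisenberg group multiplication on `ℝ³`. -/
noncomputable def hmul (x y : ℝ × ℝ × ℝ) : ℝ × ℝ × ℝ :=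
  (x.1 + y.1, x.2.1 + y.2.1, x.2.2 + y.2.2 + (x.1 * y.2.1 - y.1 * x.2.1) / 2)

/-- The Heisenberg group inverse. -/
def hinv (x : ℝ × ℝ × ℝ) : ℝ × ℝ × ℝ := (-x.1, -x.2.1, -x.2.2)

/-- The Korányi quasi-norm on `ℍ¹ = ℝ³`. -/
noncomputable def knorm (x : ℝ × ℝ × ℝ) : ℝ :=
  ((x.1 ^ 2 + x.2.1 ^ 2) ^ 2 + 16 * x.2.2 ^ 2) ^ ((1 : ℝ) / 4)

/-- The Korányi distance `d(x,x₀) = ‖x₀⁻¹·x‖_K`. -/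
noncomputable def kdist (x x0 : ℝ × ℝ × ℝ) : ℝ := knorm (hmul (hinv x0) x)

/-- Derivative of the generic inner polynomial. -/
lemma hd_poly (a b c q e t : ℝ) :
    HasDerivAt (fun s : ℝ => ((s * b - a) ^ 2 + c) ^ 2 + 16 * (q + e * s) ^ 2)
      (4 * ((t * b - a) ^ 2 + c) * (t * b - a) * b + 32 * e * (q + e * t)) t := by
  have h1 : HasDerivAt (fun s : ℝ => ((s * b - a) ^ 2 + c) ^ 2)
      (2 * ((t * b - a) ^ 2 + c) ^ 1 * (2 * (t * b - a) ^ 1 * b)) t := by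
    have hb : HasDerivAt (fun s : ℝ => s * b - a) b t := by
      simpa using ((hasDerivAt_id t).mul_const b).sub_const a
    exact (((hb.pow 2).add_const c).pow 2)
  have h2 : HasDerivAt (fun s : ℝ => 16 * (q + e * s) ^ 2)
      (16 * (2 * (q + e * t) ^ 1 * e)) t := by
    have he : HasDerivAt (fun s : ℝ => q + e * s) e t := by
      simpa using ((hasDerivAt_id t).const_mul e).const_add q
    exact (he.pow 2).const_mul 16
  have := h1.add h2
  exact this.congr_deriv (by ring)

/-- Derivative of the rpow of the generic inner polynomial. -/
lemma hd_kdist (a b c q e t : ℝ)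
    (hne : ((t * b - a) ^ 2 + c) ^ 2 + 16 * (q + e * t) ^ 2 ≠ 0) :
    HasDerivAt (fun s : ℝ => (((s * b - a) ^ 2 + c) ^ 2 + 16 * (q + e * s) ^ 2) ^ ((1:ℝ)/4))
      ((4 * ((t * b - a) ^ 2 + c) * (t * b - a) * b + 32 * e * (q + e * t)) * ((1:ℝ)/4)
        * (((t * b - a) ^ 2 + c) ^ 2 + 16 * (q + e * t) ^ 2) ^ ((1:ℝ)/4 - 1)) t :=
  (hd_poly a b c q e t).rpow_const (Or.inl hne)

/-- The horizontal gradient of the Korányi distance has norm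
`P^{1/2}/(P²+16Q²)^{1/4} ≤ 1`. -/
theorem horizontal_gradient_koranyi_distance (x0 x : ℝ × ℝ × ℝ)
    (hx : 0 < kdist x x0) :
    let P := (x.1 - x0.1) ^ 2 + (x.2.1 - x0.2.1) ^ 2
    let Q := x.2.2 - x0.2.2 - x0.1 * x.2.1 / 2 + x0.2.1 * x.1 / 2
    Real.sqrt ((X1 (fun z => kdist z x0) x) ^ 2 + (X2 (fun z => kdist z x0) x) ^ 2)
        = Real.sqrt P / (P ^ 2 + 16 * Q ^ 2) ^ ((1 : ℝ) / 4) ∧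
    Real.sqrt P / (P ^ 2 + 16 * Q ^ 2) ^ ((1 : ℝ) / 4) ≤ 1 := by
  intro P Q
  obtain ⟨a1, a2, a3⟩ := x0
  obtain ⟨x1, x2, x3⟩ := x
  simp only [P, Q] at *
  clear P Q
  set u : ℝ := x1 - a1 with hu
  set v : ℝ := x2 - a2 with hv
  set P : ℝ := u ^ 2 + v ^ 2 with hP
  set Q : ℝ := x3 - a3 - a1 * x2 / 2 + a2 * x1 / 2 with hQ
  set T : ℝ := P ^ 2 + 16 * Q ^ 2 with hT
  have hPnn : 0 ≤ P := by positivity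
  have hTnn : 0 ≤ T := by positivity
  have key : ∀ z1 z2 z3 : ℝ, kdist (z1, z2, z3) (a1, a2, a3) =
      (((z1 - a1) ^ 2 + (z2 - a2) ^ 2) ^ 2
        + 16 * (z3 - a3 - a1 * z2 / 2 + a2 * z1 / 2) ^ 2) ^ ((1:ℝ)/4) := by
    intro z1 z2 z3
    simp only [kdist, knorm, hmul, hinv]
    ring_nf
  have hT0 : 0 < T := by
    rcases hTnn.lt_or_eq with h | h
    · exact h
    · exfalso
      rw [key x1 x2 x3] at hx
      have e : ((x1 - a1) ^ 2 + (x2 - a2) ^ 2) ^ 2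
          + 16 * (x3 - a3 - a1 * x2 / 2 + a2 * x1 / 2) ^ 2 = T := by
        rw [hT, hP, hQ, hu, hv]
      rw [e, ← h, Real.zero_rpow (by norm_num)] at hx
      exact lt_irrefl 0 hx
  have hTne : T ≠ 0 := ne_of_gt hT0
  -- derivative in x1 : b = 1, a = a1, c = v^2, q = x3 - a3 - a1*x2/2, e = a2/2
  have hD1 : deriv (fun t => kdist (t, x2, x3) (a1, a2, a3)) x1
      = (4 * P * u + 32 * (a2/2) * Q) * ((1:ℝ)/4) * T ^ ((1:ℝ)/4 - 1) := by
    have h := hd_kdist a1 1 (v ^ 2) (x3 - a3 - a1 * x2 / 2) (a2/2) x1 (by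
      have : ((x1 * 1 - a1) ^ 2 + v ^ 2) ^ 2
          + 16 * (x3 - a3 - a1 * x2 / 2 + a2 / 2 * x1) ^ 2 = T := by
        rw [hT, hP, hQ, hu]; ring
      rw [this]; exact hTne)
    have heq : (fun t => kdist (t, x2, x3) (a1, a2, a3))
        = fun s : ℝ => (((s * 1 - a1) ^ 2 + v ^ 2) ^ 2
          + 16 * (x3 - a3 - a1 * x2 / 2 + a2 / 2 * s) ^ 2) ^ ((1:ℝ)/4) := by
      funext s
      rw [key s x2 x3, hv]
      ring_nf
    rw [heq, h.deriv]
    have h1 : ((x1 * 1 - a1) ^ 2 + v ^ 2) = P := by rw [hP, hu]; ring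
    have h2 : (x3 - a3 - a1 * x2 / 2 + a2 / 2 * x1) = Q := by rw [hQ]; ring
    rw [h1, h2]
    have h3 : P ^ 2 + 16 * Q ^ 2 = T := hT.symm
    rw [h3, hu]
    ring_nf
  have hD2 : deriv (fun t => kdist (x1, t, x3) (a1, a2, a3)) x2
      = (4 * P * v + 32 * (-a1/2) * Q) * ((1:ℝ)/4) * T ^ ((1:ℝ)/4 - 1) := by
    have h := hd_kdist a2 1 (u ^ 2) (x3 - a3 + a2 * x1 / 2) (-a1/2) x2 (by
      have : ((x2 * 1 - a2) ^ 2 + u ^ 2) ^ 2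
          + 16 * (x3 - a3 + a2 * x1 / 2 + -a1 / 2 * x2) ^ 2 = T := by
        rw [hT, hP, hQ, hu, hv]; ring
      rw [this]; exact hTne)
    have heq : (fun t => kdist (x1, t, x3) (a1, a2, a3))
        = fun s : ℝ => (((s * 1 - a2) ^ 2 + u ^ 2) ^ 2
          + 16 * (x3 - a3 + a2 * x1 / 2 + -a1 / 2 * s) ^ 2) ^ ((1:ℝ)/4) := by
      funext s
      rw [key x1 s x3, hu]
      ring_nf
    rw [heq, h.deriv]
    have h1 : ((x2 * 1 - a2) ^ 2 + u ^ 2) = P := by rw [hP, hv]; ring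
    have h2 : (x3 - a3 + a2 * x1 / 2 + -a1 / 2 * x2) = Q := by rw [hQ]; ring
    rw [h1, h2, ← hT, hv]
    ring_nf
  have hD3 : deriv (fun t => kdist (x1, x2, t) (a1, a2, a3)) x3
      = 8 * Q * T ^ ((1:ℝ)/4 - 1) := by
    have h := hd_kdist 0 0 P (-a3 - a1 * x2 / 2 + a2 * x1 / 2) 1 x3 (by
      have : ((x3 * 0 - 0) ^ 2 + P) ^ 2
          + 16 * (-a3 - a1 * x2 / 2 + a2 * x1 / 2 + 1 * x3) ^ 2 = T := by
        rw [hT, hQ]; ring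
      rw [this]; exact hTne)
    have heq : (fun t => kdist (x1, x2, t) (a1, a2, a3))
        = fun s : ℝ => (((s * 0 - 0) ^ 2 + P) ^ 2
          + 16 * (-a3 - a1 * x2 / 2 + a2 * x1 / 2 + 1 * s) ^ 2) ^ ((1:ℝ)/4) := by
      funext s
      rw [key x1 x2 s, hP, hu, hv]
      ring_nf
    rw [heq, h.deriv]
    have h1 : ((x3 * 0 - 0) ^ 2 + P) = P := by ring
    have h2 : (-a3 - a1 * x2 / 2 + a2 * x1 / 2 + 1 * x3) = Q := by rw [hQ]; ring
    rw [h1, h2, ← hT]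
    ring_nf
  have hX1 : X1 (fun z => kdist z (a1, a2, a3)) (x1, x2, x3)
      = (P * u - 4 * Q * v) * T ^ ((1:ℝ)/4 - 1) := by
    simp only [X1]
    rw [hD1, hD3, hv]
    ring
  have hX2 : X2 (fun z => kdist z (a1, a2, a3)) (x1, x2, x3)
      = (P * v + 4 * Q * u) * T ^ ((1:ℝ)/4 - 1) := by
    simp only [X2]
    rw [hD2, hD3, hu]
    ring
  constructor
  · rw [hX1, hX2]
    have hr2 : (T ^ ((1:ℝ)/4 - 1)) ^ 2 = T ^ (-(3:ℝ)/2) := by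
      rw [← Real.rpow_natCast (T ^ ((1:ℝ)/4 - 1)) 2, ← Real.rpow_mul hTnn]
      norm_num
    have hsum : (P * u - 4 * Q * v) ^ 2 + (P * v + 4 * Q * u) ^ 2 = P * T := by
      rw [hT, hP]; ring
    have : ((P * u - 4 * Q * v) * T ^ ((1:ℝ)/4 - 1)) ^ 2
        + ((P * v + 4 * Q * u) * T ^ ((1:ℝ)/4 - 1)) ^ 2
        = P * T ^ (-(1:ℝ)/2) := by
      rw [mul_pow, mul_pow, ← add_mul, hsum, hr2, mul_assoc,
        ← Real.rpow_one_add' hTnn (by norm_num : (1:ℝ) + -3/2 ≠ 0)]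
      congr 1
      norm_num
    rw [this, Real.sqrt_mul hPnn, div_eq_mul_inv]
    congr 1
    rw [Real.sqrt_eq_rpow, ← Real.rpow_mul hTnn, ← Real.rpow_neg hTnn]
    congr 1
    norm_num
  · have h1 : Real.sqrt P = (P ^ 2) ^ ((1:ℝ)/4) := by
      rw [← Real.rpow_natCast P 2, ← Real.rpow_mul hPnn, Real.sqrt_eq_rpow]
      norm_num
    rw [h1, div_le_one (Real.rpow_pos_of_pos hT0 _)]
    apply Real.rpow_le_rpow (sq_nonneg P) _ (by norm_num)
    rw [hT]
    linarith [sq_nonneg Q]
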